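/- Let α, β ∈ ℝ and define the polynomials Q3(t) = −(4/3)t³ + α t² − (α²/4) t + β and Q4(t) = (4/3)t⁴ − (4/3)α t³ + (α²/2) t² + ((16β − α³)/8) t + (α⁴ − 32 α β)/64. Then on any open interval I ⊆ ℝ where Q3 > 0 and Q4 > 0, the pair f(t) = ln Q3(t), g(t) = ln Q4(t) satisfies the V1 truncated system (1/4)·f''(t) = −e^{g(t) − 2 f(t)} and (1/4)·g''(t) = −e^{−2 g(t) + 2 f(t)} for all t ∈ I. (This is the two-parameter family 'Set B' of explicit solutions.) -/

import Mathlib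

private lemma quartic_deriv (c4 c3 c2 c1 c0 : ℝ) (t : ℝ) :
    HasDerivAt (fun t : ℝ => c4*t^4 + c3*t^3 + c2*t^2 + c1*t + c0)
      (4*c4*t^3 + 3*c3*t^2 + 2*c2*t + c1) t := by
  have h := (((hasDerivAt_pow 4 t).const_mul c4).add
    (((hasDerivAt_pow 3 t).const_mul c3).add
      (((hasDerivAt_pow 2 t).const_mul c2).add
        (((hasDerivAt_id t).const_mul c1).add_const c0))))
  convert h using 1
  any_goals rfl
  · funext x; simp only [id, Pi.add_apply]; ring
  · push_cast; ring

private lemma logderiv2 (Q P R : ℝ → ℝ) (t : ℝ) (a b : ℝ) (ht : t ∈ Set.Ioo a b)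
    (hpos : ∀ s ∈ Set.Ioo a b, 0 < Q s)
    (hQ : ∀ s, HasDerivAt Q (P s) s) (hP : ∀ s, HasDerivAt P (R s) s) :
    deriv (deriv (fun s => Real.log (Q s))) t
      = (R t * Q t - P t * P t) / (Q t)^2 := by
  have hmem : Set.Ioo a b ∈ nhds t := isOpen_Ioo.mem_nhds ht
  have h1 : deriv (fun s => Real.log (Q s)) =ᶠ[nhds t] fun s => P s / Q s := by
    filter_upwards [hmem] with s hs
    exact ((hQ s).log (hpos s hs).ne').deriv
  rw [Filter.EventuallyEq.deriv_eq h1]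
  exact (((hP t).div (hQ t) (hpos t ht).ne')).deriv

/-- The two-parameter family "Set B" of explicit solutions of the V1 truncated system:
with `Q3(t) = −(4/3)t³ + α t² − (α²/4)t + β` and
`Q4(t) = (4/3)t⁴ − (4/3)α t³ + (α²/2)t² + ((16β − α³)/8)t + (α⁴ − 32αβ)/64`,
the pair `f = ln Q3`, `g = ln Q4` solves `(1/4) f'' = −e^{g−2f}`, `(1/4) g'' = −e^{−2g+2f}`
on any open interval where `Q3 > 0` and `Q4 > 0`. -/
theorem V1_truncation_setB_solution (α β : ℝ)
    (Q3 Q4 : ℝ → ℝ)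
    (hQ3 : Q3 = fun t => -(4/3) * t^3 + α * t^2 - (α^2/4) * t + β)
    (hQ4 : Q4 = fun t => (4/3) * t^4 - (4/3) * α * t^3 + (α^2/2) * t^2
      + ((16 * β - α^3)/8) * t + (α^4 - 32 * α * β)/64)
    (a b : ℝ) (hpos : ∀ t ∈ Set.Ioo a b, 0 < Q3 t ∧ 0 < Q4 t)
    (f g : ℝ → ℝ) (hf : f = fun t => Real.log (Q3 t)) (hg : g = fun t => Real.log (Q4 t)) :
    ∀ t ∈ Set.Ioo a b,
      (1/4) * deriv (deriv f) t = -Real.exp (g t - 2 * f t) ∧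
      (1/4) * deriv (deriv g) t = -Real.exp (-(2 * g t) + 2 * f t) := by
  intro t ht
  obtain ⟨h3, h4⟩ := hpos t ht
  -- derivatives of Q3
  have hd3 : ∀ s, HasDerivAt Q3 (-4*s^2 + 2*α*s - α^2/4) s := by
    intro s
    rw [hQ3]
    have h := quartic_deriv 0 (-(4/3)) α (-(α^2/4)) β s
    convert h using 1
    · funext x; ring
    · ring
  have hd3' : ∀ s, HasDerivAt (fun s : ℝ => -4*s^2 + 2*α*s - α^2/4) (-8*s + 2*α) s := by
    intro s
    have h := quartic_deriv 0 0 (-4) (2*α) (-(α^2/4)) s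
    convert h using 1
    · funext x; ring
    · ring
  have hd4 : ∀ s, HasDerivAt Q4 ((16/3)*s^3 - 4*α*s^2 + α^2*s + (16*β - α^3)/8) s := by
    intro s
    rw [hQ4]
    have h := quartic_deriv (4/3) (-(4/3)*α) (α^2/2) ((16*β - α^3)/8) ((α^4 - 32*α*β)/64) s
    convert h using 1
    · funext x; ring
    · ring
  have hd4' : ∀ s, HasDerivAt (fun s : ℝ => (16/3)*s^3 - 4*α*s^2 + α^2*s + (16*β - α^3)/8)
      (16*s^2 - 8*α*s + α^2) s := by
    intro s
    have h := quartic_deriv 0 (16/3) (-(4*α)) (α^2) ((16*β - α^3)/8) s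
    convert h using 1
    · funext x; ring
    · ring
  have hdf : deriv (deriv f) t
      = ((-8*t + 2*α) * Q3 t - (-4*t^2 + 2*α*t - α^2/4) * (-4*t^2 + 2*α*t - α^2/4)) / (Q3 t)^2 := by
    rw [hf]
    exact logderiv2 Q3 _ _ t a b ht (fun s hs => (hpos s hs).1) hd3 hd3'
  have hdg : deriv (deriv g) t
      = ((16*t^2 - 8*α*t + α^2) * Q4 t
          - ((16/3)*t^3 - 4*α*t^2 + α^2*t + (16*β - α^3)/8)
            * ((16/3)*t^3 - 4*α*t^2 + α^2*t + (16*β - α^3)/8)) / (Q4 t)^2 := by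
    rw [hg]
    exact logderiv2 Q4 _ _ t a b ht (fun s hs => (hpos s hs).2) hd4 hd4'
  have hexp1 : Real.exp (g t - 2 * f t) = Q4 t / (Q3 t)^2 := by
    rw [hf, hg]
    simp only
    rw [Real.exp_sub, Real.exp_log h4, two_mul, Real.exp_add, Real.exp_log h3, sq]
  have hexp2 : Real.exp (-(2 * g t) + 2 * f t) = (Q3 t)^2 / (Q4 t)^2 := by
    rw [hf, hg]
    simp only
    rw [Real.exp_add, Real.exp_neg, two_mul, two_mul, Real.exp_add, Real.exp_add,
      Real.exp_log h3, Real.exp_log h4, sq, sq]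
    ring
  have key1 : (-8*t + 2*α) * Q3 t - (-4*t^2 + 2*α*t - α^2/4) * (-4*t^2 + 2*α*t - α^2/4)
      = -4 * Q4 t := by rw [hQ3, hQ4]; ring
  have key2 : (16*t^2 - 8*α*t + α^2) * Q4 t
      - ((16/3)*t^3 - 4*α*t^2 + α^2*t + (16*β - α^3)/8)
        * ((16/3)*t^3 - 4*α*t^2 + α^2*t + (16*β - α^3)/8) = -4 * (Q3 t)^2 := by
    rw [hQ3, hQ4]; ring
  constructor
  · rw [hdf, key1, hexp1]; ring
  · rw [hdg, key2, hexp2]; ring
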